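/- Let 1 ≤ r < ω and let μ be an infinite cardinal. The shift graph Sh_r(κ), where κ is the successor cardinal ℶ_{r−1}(μ)⁺ with its natural ordinal order, has no proper coloring with colors in a set of cardinality at most μ; in particular its chromatic number is at least μ⁺. -/

import Mathlib

open Cardinal

/-- `t` is the shift of `s`: `s_i = t_{i-1}` for all `1 ≤ i ≤ r-1`. -/
def IsShiftOf {A : Type} {r : ℕ} (s t : Fin r → A) : Prop :=
  ∀ (i : ℕ) (h : i + 1 < r), s ⟨i + 1, h⟩ = t ⟨i, Nat.lt_of_succ_lt h⟩

/-- The shift graph `Sh_r(A)` on a linear order `A`: vertices are strictly increasing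
`r`-tuples from `A`, and distinct vertices `s, t` are adjacent iff one is the shift
of the other. -/
def ShiftGraph (A : Type) [LinearOrder A] (r : ℕ) :
    SimpleGraph {s : Fin r → A // StrictMono s} where
  Adj s t := s ≠ t ∧ (IsShiftOf s.1 t.1 ∨ IsShiftOf t.1 s.1)
  symm := by
    constructor
    rintro s t ⟨hne, h⟩
    exact ⟨hne.symm, h.symm⟩
  loopless := by
    constructor
    rintro s ⟨hne, -⟩
    exact hne rfl

/-- The symmetric shift graph `Sh_r^sym(A)` on a set `A`: vertices are `r`-tuples of
pairwise distinct elements of `A`, and distinct vertices `s, t` are adjacent iff one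
is the shift of the other. -/
def SymShiftGraph (A : Type) (r : ℕ) :
    SimpleGraph {s : Fin r → A // Function.Injective s} where
  Adj s t := s ≠ t ∧ (IsShiftOf s.1 t.1 ∨ IsShiftOf t.1 s.1)
  symm := by
    constructor
    rintro s t ⟨hne, h⟩
    exact ⟨hne.symm, h.symm⟩
  loopless := by
    constructor
    rintro s ⟨hne, -⟩
    exact hne rfl

/-- Iterated beth: `iterBeth μ 0 = μ` and `iterBeth μ (k+1) = 2 ^ iterBeth μ k`. -/
def iterBeth (μ : Cardinal) : ℕ → Cardinal
  | 0 => μ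
  | k + 1 => 2 ^ iterBeth μ k

lemma snoc_strictMono {A : Type} [LinearOrder A] {m : ℕ} {f : Fin (m+1) → A} {a : A}
    (hf : StrictMono f) (ha : f (Fin.last m) < a) : StrictMono (Fin.snoc f a) := by
  intro i j hij
  rcases Fin.eq_castSucc_or_eq_last j with ⟨j', rfl⟩ | rfl
  · rcases Fin.eq_castSucc_or_eq_last i with ⟨i', rfl⟩ | rfl
    · rw [Fin.snoc_castSucc, Fin.snoc_castSucc]
      exact hf (by exact_mod_cast hij)
    · exact absurd hij (by simp [Fin.lt_iff_val_lt_val])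
  · rcases Fin.eq_castSucc_or_eq_last i with ⟨i', rfl⟩ | rfl
    · rw [Fin.snoc_castSucc, Fin.snoc_last]
      exact lt_of_le_of_lt (hf.monotone (Fin.le_last _)) ha
    · exact absurd hij (lt_irrefl _)

lemma shift_step {A : Type} [LinearOrder A] {C : Type} {m : ℕ}
    (c : {s : Fin (m+2) → A // StrictMono s} → C)
    (hc : ∀ x y, (ShiftGraph A (m+2)).Adj x y → c x ≠ c y) :
    ∃ d : {s : Fin (m+1) → A // StrictMono s} → Set C,
      ∀ x y, (ShiftGraph A (m+1)).Adj x y → d x ≠ d y := by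
  refine ⟨fun s => {x | ∃ α, ∃ hα : s.1 (Fin.last m) < α,
      x = c ⟨Fin.snoc s.1 α, snoc_strictMono s.2 hα⟩}, ?_⟩
  -- key lemma: shift + last-element order ⇒ different color sets
  have L : ∀ (s t : {s : Fin (m+1) → A // StrictMono s}), IsShiftOf s.1 t.1 →
      s.1 (Fin.last m) < t.1 (Fin.last m) →
      ({x | ∃ α, ∃ hα : s.1 (Fin.last m) < α,
        x = c ⟨Fin.snoc s.1 α, snoc_strictMono s.2 hα⟩} : Set C) ≠
      {x | ∃ α, ∃ hα : t.1 (Fin.last m) < α,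
        x = c ⟨Fin.snoc t.1 α, snoc_strictMono t.2 hα⟩} := by
    intro s t hsh hlt hd
    have h1 : c ⟨Fin.snoc s.1 (t.1 (Fin.last m)), snoc_strictMono s.2 hlt⟩ ∈
        ({x | ∃ α, ∃ hα : s.1 (Fin.last m) < α,
          x = c ⟨Fin.snoc s.1 α, snoc_strictMono s.2 hα⟩} : Set C) :=
      ⟨t.1 (Fin.last m), hlt, rfl⟩
    rw [hd] at h1
    obtain ⟨γ, hγ, heq⟩ := h1
    refine hc ⟨Fin.snoc s.1 (t.1 (Fin.last m)), snoc_strictMono s.2 hlt⟩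
      ⟨Fin.snoc t.1 γ, snoc_strictMono t.2 hγ⟩ ⟨?_, Or.inl ?_⟩ heq
    · intro h
      have h2 : (Fin.snoc s.1 (t.1 (Fin.last m)) : Fin (m+2) → A) (Fin.last (m+1)) =
          (Fin.snoc t.1 γ : Fin (m+2) → A) (Fin.last (m+1)) :=
        congrFun (congrArg Subtype.val h) _
      rw [Fin.snoc_last, Fin.snoc_last] at h2
      exact absurd h2 hγ.ne
    · intro i hi
      show (Fin.snoc s.1 (t.1 (Fin.last m)) : Fin (m+2) → A) ⟨i+1, hi⟩ =
        (Fin.snoc t.1 γ : Fin (m+2) → A) ⟨i, Nat.lt_of_succ_lt hi⟩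
      have hi2 : i < m + 1 := by omega
      have hv : (⟨i, Nat.lt_of_succ_lt hi⟩ : Fin (m+2)) = Fin.castSucc ⟨i, hi2⟩ := rfl
      rw [hv, Fin.snoc_castSucc]
      rcases Nat.lt_or_ge (i+1) (m+1) with h4 | h4
      · have h5 : (⟨i+1, hi⟩ : Fin (m+2)) = Fin.castSucc ⟨i+1, h4⟩ := rfl
        rw [h5, Fin.snoc_castSucc]
        exact hsh i h4
      · have h5 : (⟨i+1, hi⟩ : Fin (m+2)) = Fin.last (m+1) := Fin.ext (by simp; omega)
        have h6 : (⟨i, hi2⟩ : Fin (m+1)) = Fin.last m := Fin.ext (by simp; omega)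
        rw [h5, Fin.snoc_last, h6]
  -- now properness
  have prop : ∀ (x y : {s : Fin (m+1) → A // StrictMono s}), x ≠ y →
      IsShiftOf x.1 y.1 →
      ({a | ∃ α, ∃ hα : x.1 (Fin.last m) < α,
        a = c ⟨Fin.snoc x.1 α, snoc_strictMono x.2 hα⟩} : Set C) ≠
      {a | ∃ α, ∃ hα : y.1 (Fin.last m) < α,
        a = c ⟨Fin.snoc y.1 α, snoc_strictMono y.2 hα⟩} := by
    intro x y hne hsh
    rcases lt_trichotomy (x.1 (Fin.last m)) (y.1 (Fin.last m)) with hlt | heq | hgt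
    · exact L x y hsh hlt
    · exfalso
      cases m with
      | zero =>
        exact hne (Subtype.ext (funext fun j => by
          rw [show j = Fin.last 0 from Fin.ext (by omega)]; exact heq))
      | succ m' =>
        have h7 := hsh m' (by omega)
        have h8 : (⟨m'+1, by omega⟩ : Fin (m'+1+1)) = Fin.last (m'+1) := rfl
        rw [h8, heq] at h7
        have h9 : (⟨m', by omega⟩ : Fin (m'+1+1)) < Fin.last (m'+1) := by
          simp [Fin.lt_iff_val_lt_val]
        exact absurd h7 (y.2 h9).ne'
    · refine Ne.symm (L y x ?_ hgt)
      intro i hi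
      exfalso
      have hm : 1 ≤ m := by omega
      have h7 := hsh (m-1) (by omega)
      have h8 : (⟨m-1+1, by omega⟩ : Fin (m+1)) = Fin.last m := Fin.ext (by simp; omega)
      rw [h8] at h7
      have h9 : (⟨m-1, by omega⟩ : Fin (m+1)) < Fin.last m := by
        simp [Fin.lt_iff_val_lt_val]; omega
      have h10 : x.1 (Fin.last m) < y.1 (Fin.last m) := h7.trans_lt (y.2 h9)
      exact absurd h10 (lt_asymm hgt)
  rintro x y ⟨hne, hsh | hsh⟩
  · exact prop x y hne hsh
  · exact (prop y x hne.symm hsh).symm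

lemma iterBeth_two_pow (ν : Cardinal) : ∀ m, iterBeth (2 ^ ν) m = iterBeth ν (m+1)
  | 0 => rfl
  | m + 1 => by rw [iterBeth, iterBeth_two_pow ν m]; rfl

lemma iterBeth_mono {a b : Cardinal} (h : a ≤ b) : ∀ m, iterBeth a m ≤ iterBeth b m
  | 0 => h
  | m + 1 => power_le_power_left two_ne_zero (iterBeth_mono h m)

lemma shift_main (m : ℕ) : ∀ (A : Type) [LinearOrder A] (C : Type)
    (c : {s : Fin (m+1) → A // StrictMono s} → C),
    (∀ x y, (ShiftGraph A (m+1)).Adj x y → c x ≠ c y) → #A ≤ iterBeth #C m := by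
  induction m with
  | zero =>
    intro A _ C c hc
    have mono : ∀ a : A, StrictMono (fun _ : Fin 1 => a) :=
      fun a i j h => absurd (Subsingleton.elim i j) h.ne
    refine Cardinal.mk_le_of_injective (f := fun a => c ⟨fun _ => a, mono a⟩) ?_
    intro a b hab
    by_contra hne
    refine hc ⟨fun _ => a, mono a⟩ ⟨fun _ => b, mono b⟩ ⟨?_, Or.inl ?_⟩ hab
    · intro h
      exact hne (congrFun (congrArg Subtype.val h) 0)
    · intro i hi
      omega
  | succ m ih =>
    intro A _ C c hc
    obtain ⟨d, hd⟩ := shift_step c hc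
    calc #A ≤ iterBeth #(Set C) m := ih A (Set C) d hd
      _ = iterBeth (2 ^ #C) m := by rw [Cardinal.mk_set]
      _ = iterBeth #C (m+1) := iterBeth_two_pow _ m

theorem stmt_15 (r : ℕ) (hr : 1 ≤ r) (μ : Cardinal) (hμ : ℵ₀ ≤ μ) :
    ¬ ∃ (C : Type)
        (c : {s : Fin r → (Order.succ (iterBeth μ (r - 1))).ord.ToType //
          StrictMono s} → C), #C ≤ μ ∧
        ∀ x y, (ShiftGraph (Order.succ (iterBeth μ (r - 1))).ord.ToType r).Adj x y →
          c x ≠ c y := by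
  obtain ⟨m, rfl⟩ : ∃ m, r = m + 1 := ⟨r - 1, by omega⟩
  rintro ⟨C, c, hC, hc⟩
  have h1 := shift_main m (Order.succ (iterBeth μ m)).ord.ToType C c hc
  rw [Cardinal.mk_ord_toType] at h1
  have h2 : iterBeth #C m ≤ iterBeth μ m := iterBeth_mono hC m
  exact absurd (h1.trans h2) (Order.lt_succ (iterBeth μ m)).not_ge
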